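/- No cycle C_n of odd length admits a locally irregular edge coloring. -/

import Mathlib

open Finset SimpleGraph

/-- Degree of `v` in the color class `k` of the edge coloring `c` of `G`. -/
def degIn {V K : Type*} [Fintype V] (G : SimpleGraph V) [DecidableRel G.Adj] [DecidableEq K]
    (c : Sym2 V → K) (k : K) (v : V) : ℕ :=
  (Finset.univ.filter fun w => G.Adj v w ∧ c s(v, w) = k).card

/-- `c` is a locally irregular edge coloring of the simple graph `G`. -/
def IsLIC {V K : Type*} [Fintype V] (G : SimpleGraph V) [DecidableRel G.Adj] [DecidableEq K]
    (c : Sym2 V → K) : Prop :=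
  ∀ v w, G.Adj v w → degIn G c (c s(v, w)) v ≠ degIn G c (c s(v, w)) w

/-- In the 2-multigraph `²G`, each edge of `G` carries a pair of colors (one for each
parallel copy).  `degIn2 G c k v` is the degree of `v` in the color class `k`. -/
def degIn2 {V K : Type*} [Fintype V] (G : SimpleGraph V) [DecidableRel G.Adj] [DecidableEq K]
    (c : Sym2 V → K × K) (k : K) (v : V) : ℕ :=
  ∑ w ∈ Finset.univ.filter (fun w => G.Adj v w),
    ((if (c s(v, w)).1 = k then 1 else 0) + (if (c s(v, w)).2 = k then 1 else 0))

/-- `c` is a locally irregular edge coloring of the 2-multigraph `²G`. -/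
def IsLIC2 {V K : Type*} [Fintype V] (G : SimpleGraph V) [DecidableRel G.Adj] [DecidableEq K]
    (c : Sym2 V → K × K) : Prop :=
  ∀ v w, G.Adj v w → ∀ k : K, ((c s(v, w)).1 = k ∨ (c s(v, w)).2 = k) →
    degIn2 G c k v ≠ degIn2 G c k w

instance {n : ℕ} : DecidableRel (SimpleGraph.pathGraph n).Adj := fun _ _ =>
  decidable_of_iff _ (SimpleGraph.pathGraph_adj).symm

/-- No odd cycle admits a locally irregular edge coloring. -/
theorem stmt_5 (n : ℕ) (hn : 3 ≤ n) (hodd : Odd n) (K : Type*) [DecidableEq K]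
    (c : Sym2 (Fin n) → K) : ¬ IsLIC (cycleGraph n) c := by
  intro h
  obtain ⟨m, rfl⟩ : ∃ m, n = m + 3 := ⟨n - 3, by omega⟩
  -- degree formula in the cycle
  have hdeg : ∀ (k : K) (v : Fin (m+3)), degIn (cycleGraph (m+3)) c k v =
      (if c s(v, v-1) = k then 1 else 0) + (if c s(v, v+1) = k then 1 else 0) := by
    intro k v
    have hne : v - 1 ≠ v + 1 := by
      intro hh
      have h2 : v - 1 + 1 = v + 1 + 1 := by rw [hh]
      rw [sub_add_cancel, add_assoc, left_eq_add] at h2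
      rw [Fin.ext_iff] at h2
      simp [Fin.val_add] at h2
      rw [Nat.mod_eq_of_lt (by omega)] at h2
      omega
    unfold degIn
    have heq : (Finset.univ.filter fun w => (cycleGraph (m+3)).Adj v w ∧ c s(v,w) = k)
        = ({v-1, v+1} : Finset (Fin (m+3))).filter (fun w => c s(v,w) = k) := by
      ext w
      simp only [mem_filter, mem_univ, true_and, mem_insert, mem_singleton,
        ← mem_neighborFinset, cycleGraph_neighborFinset]
    rw [heq, filter_insert, filter_singleton]
    split_ifs <;> simp_all [card_insert_of_notMem]
  -- alternation predicate
  set P : Fin (m+3) → Prop := fun v => c s(v, v+1) = c s(v+1, v+1+1) with hP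
  have key : ∀ v : Fin (m+3), P v ↔ ¬ P (v+1) := by
    intro v
    have hadj : (cycleGraph (m+3)).Adj (v+1) (v+1+1) := by
      rw [cycleGraph_adj]
      right; rw [add_sub_cancel_left]
    have H := h (v+1) (v+1+1) hadj
    rw [hdeg, hdeg, add_sub_cancel_right, add_sub_cancel_right] at H
    have e3 : (s(v+1+1, v+1) : Sym2 (Fin (m+3))) = s(v+1, v+1+1) := Sym2.eq_swap
    have e4 : (s(v+1, v) : Sym2 (Fin (m+3))) = s(v, v+1) := Sym2.eq_swap
    rw [e3, e4, if_pos rfl] at H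
    simp only [hP]
    constructor
    · intro hp hq
      rw [if_pos hp, if_pos hq.symm] at H
      exact H rfl
    · intro hq
      by_contra hp
      rw [if_neg hp, if_neg (fun h' => hq h'.symm)] at H
      exact H (by norm_num)
  -- transfer to ℕ and alternate
  open Fin.NatCast in
  set Q : ℕ → Prop := fun i => P (i : Fin (m+3)) with hQ
  open Fin.NatCast in
  have keyQ : ∀ i : ℕ, Q i ↔ ¬ Q (i+1) := by
    intro i
    have : ((i+1 : ℕ) : Fin (m+3)) = (i : Fin (m+3)) + 1 := by push_cast; ring
    simp only [hQ, this]
    exact key _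
  have alt : ∀ i : ℕ, Q i ↔ (Even i ↔ Q 0) := by
    intro i
    induction i with
    | zero => simp
    | succ i ih =>
      have h1 := keyQ i
      have h2 : Even (i+1) ↔ ¬ Even i := Nat.even_add_one
      tauto
  open Fin.NatCast in
  have hN : ((m + 3 : ℕ) : Fin (m+3)) = (0 : Fin (m+3)) := by
    exact_mod_cast Fin.natCast_self (m+3)
  have hQN : Q (m+3) ↔ Q 0 := by simp only [hQ, hN]; rfl
  have : ¬ Even (m+3) := Nat.not_even_iff_odd.mpr hodd
  have := alt (m+3)
  tauto
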